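/- Let π⁰ and π¹ be two interlaced pairings of {1,…,d}. Then any x ∈ ℝ^d whose coordinates take more than 2 distinct values can be recovered from the values of the one-layer Haar scattering S_1 x computed with π⁰ together with S_1 x computed with π¹. That is, the map x ↦ (S_1^{π⁰} x, S_1^{π¹} x) is injective on the set of vectors with more than two distinct coordinate values. -/

import Mathlib

/-- A pairing of the `d` coordinates: a fixed-point-free involution; the pairs
are the orbits `{v, π v}`. -/
def IsPairing {d : ℕ} (p : Equiv.Perm (Fin d)) : Prop :=
  (∀ v, p (p v) = v) ∧ ∀ v, p v ≠ v

/-- Two pairings are interlaced if no strict nonempty subset of the coordinates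
is simultaneously invariant under both pairings. -/
def Interlaced {d : ℕ} (p0 p1 : Equiv.Perm (Fin d)) : Prop :=
  ∀ Ω : Set (Fin d), (∀ v ∈ Ω, p0 v ∈ Ω) → (∀ v ∈ Ω, p1 v ∈ Ω) → Ω = ∅ ∨ Ω = Set.univ

/-- If `π⁰` and `π¹` are interlaced pairings of `{1,…,d}`, then any vector whose
coordinates take more than 2 distinct values is determined by the one-layer Haar
scattering data (pair sums and absolute pair differences) of both pairings:
the map `x ↦ (S_1^{π⁰} x, S_1^{π¹} x)` is injective on vectors with more than
two distinct coordinate values. -/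
theorem haar_one_layer_injective {d : ℕ} (hd : Even d) (p0 p1 : Equiv.Perm (Fin d))
    (h0 : IsPairing p0) (h1 : IsPairing p1) (hI : Interlaced p0 p1)
    (x y : Fin d → ℝ)
    (hx : 2 < (Finset.univ.image x).card) (hy : 2 < (Finset.univ.image y).card)
    (e0 : ∀ u, x u + x (p0 u) = y u + y (p0 u) ∧ |x u - x (p0 u)| = |y u - y (p0 u)|)
    (e1 : ∀ u, x u + x (p1 u) = y u + y (p1 u) ∧ |x u - x (p1 u)| = |y u - y (p1 u)|) :
    x = y := by
  by_contra hxy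
  -- For each pair, the unordered pair of values agrees.
  have key : ∀ (p : Equiv.Perm (Fin d)),
      (∀ u, x u + x (p u) = y u + y (p u) ∧ |x u - x (p u)| = |y u - y (p u)|) →
      ∀ u, (x u = y u ∧ x (p u) = y (p u)) ∨ (x u = y (p u) ∧ x (p u) = y u) := by
    intro p e u
    obtain ⟨hs, hab⟩ := e u
    rcases abs_eq_abs.mp hab with h | h
    · left; constructor <;> linarith
    · right; constructor <;> linarith
  -- The set where x and y differ is invariant under both pairings.
  set A : Set (Fin d) := {v | x v ≠ y v} with hA
  have hinv : ∀ (p : Equiv.Perm (Fin d)),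
      (∀ u, (x u = y u ∧ x (p u) = y (p u)) ∨ (x u = y (p u) ∧ x (p u) = y u)) →
      ∀ v ∈ A, p v ∈ A := by
    intro p hp v hv
    rcases hp v with ⟨h1', _⟩ | ⟨h1', h2'⟩
    · exact absurd h1' hv
    · intro hc
      exact hv (by rw [h1', ← hc, h2'])
  have k0 := key p0 e0
  have k1 := key p1 e1
  rcases hI A (hinv p0 k0) (hinv p1 k1) with hA0 | hAu
  · apply hxy
    funext v
    by_contra hv
    have hvA : v ∈ A := hv
    rw [hA0] at hvA
    exact hvA
  · -- everywhere different: full swap structure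
    have hall : ∀ v, x v ≠ y v := fun v => by
      have : v ∈ A := hAu ▸ Set.mem_univ v
      exact this
    have s0 : ∀ v, x v = y (p0 v) ∧ x (p0 v) = y v := fun v =>
      (k0 v).resolve_left (fun h => hall v h.1)
    have s1 : ∀ v, x v = y (p1 v) ∧ x (p1 v) = y v := fun v =>
      (k1 v).resolve_left (fun h => hall v h.1)
    have h01 : ∀ v, y (p0 v) = y (p1 v) := fun v =>
      ((s0 v).1.symm.trans (s1 v).1)
    have h10 : ∀ v, y (p0 (p1 v)) = y v := fun v => by
      rw [h01 (p1 v), h1.1 v]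
    have h01' : ∀ v, y (p1 (p0 v)) = y v := fun v => by
      rw [← h01 (p0 v), h0.1 v]
    -- property transported along the group generated by p0, p1
    have P : ∀ g ∈ Subgroup.closure ({p0, p1} : Set (Equiv.Perm (Fin d))),
        ∀ v, (y (g v) = y v ∧ y (p0 (g v)) = y (p0 v)) ∨
             (y (g v) = y (p0 v) ∧ y (p0 (g v)) = y v) := by
      intro g hg
      induction hg using Subgroup.closure_induction with
      | mem q hq =>
          rcases hq with h | h <;> rw [h]
          · intro v; right; exact ⟨rfl, by rw [h0.1]⟩
          · intro v; right
            exact ⟨(h01 v).symm, h10 v⟩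
      | one => intro v; left; exact ⟨rfl, rfl⟩
      | mul g h _ _ ihg ihh =>
          intro v
          have hgv := ihg (h v)
          have hhv := ihh v
          simp only [Equiv.Perm.mul_apply]
          rcases hgv with ⟨a1, a2⟩ | ⟨a1, a2⟩ <;> rcases hhv with ⟨b1, b2⟩ | ⟨b1, b2⟩
          · left; exact ⟨a1.trans b1, a2.trans b2⟩
          · right; exact ⟨a1.trans b1, a2.trans b2⟩
          · right; exact ⟨a1.trans b2, a2.trans b1⟩
          · left; exact ⟨a1.trans b2, a2.trans b1⟩
      | inv g _ ihg =>
          intro v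
          have := ihg (g⁻¹ v)
          simp only [Equiv.Perm.coe_inv, Equiv.apply_symm_apply] at this
          rcases this with ⟨a1, a2⟩ | ⟨a1, a2⟩
          · left; exact ⟨a1.symm, a2.symm⟩
          · right; exact ⟨a2.symm, a1.symm⟩
    -- transitivity: the orbit of any point is everything
    have hdpos : 0 < d := by
      rcases Nat.eq_zero_or_pos d with h | h
      · subst h
        simp [Finset.univ_eq_empty] at hx
      · exact h
    have w : Fin d := ⟨0, hdpos⟩
    set Ω : Set (Fin d) :=
      {u | ∃ g ∈ Subgroup.closure ({p0, p1} : Set (Equiv.Perm (Fin d))), u = g w} with hΩ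
    have hp0c : p0 ∈ Subgroup.closure ({p0, p1} : Set (Equiv.Perm (Fin d))) :=
      Subgroup.subset_closure (Set.mem_insert _ _)
    have hp1c : p1 ∈ Subgroup.closure ({p0, p1} : Set (Equiv.Perm (Fin d))) :=
      Subgroup.subset_closure (Set.mem_insert_of_mem _ rfl)
    have hΩinv0 : ∀ v ∈ Ω, p0 v ∈ Ω := by
      rintro v ⟨g, hg, rfl⟩
      exact ⟨p0 * g, Subgroup.mul_mem _ hp0c hg, rfl⟩
    have hΩinv1 : ∀ v ∈ Ω, p1 v ∈ Ω := by
      rintro v ⟨g, hg, rfl⟩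
      exact ⟨p1 * g, Subgroup.mul_mem _ hp1c hg, rfl⟩
    have hΩw : w ∈ Ω := ⟨1, Subgroup.one_mem _, rfl⟩
    rcases hI Ω hΩinv0 hΩinv1 with h | h
    · exact absurd (h ▸ hΩw) (Set.notMem_empty w)
    · -- every value of y is y w or y (p0 w): contradiction with hy
      have hval : ∀ v, y v = y w ∨ y v = y (p0 w) := by
        intro v
        have hv : v ∈ Ω := h ▸ Set.mem_univ v
        obtain ⟨g, hg, rfl⟩ := hv
        rcases P g hg w with ⟨a1, _⟩ | ⟨a1, _⟩
        · exact Or.inl a1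
        · exact Or.inr a1
      have hsub : Finset.univ.image y ⊆ {y w, y (p0 w)} := by
        intro a ha
        simp only [Finset.mem_image] at ha
        obtain ⟨v, _, rfl⟩ := ha
        rcases hval v with h' | h' <;> simp [h']
      have := Finset.card_le_card hsub
      have h2 : ({y w, y (p0 w)} : Finset ℝ).card ≤ 2 :=
        Finset.card_insert_le _ _ |>.trans (by simp)
      omega
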